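/- Let 𝕀 be a nonempty bounded connected open subset of ℝⁿ such that ℝⁿ ∖ cl 𝕀 is connected and cl 𝕀 ⊆ Q. Let u : cl 𝕊[𝕀]⁻ → ℝ be continuous, q-periodic, twice continuously differentiable on 𝕊[𝕀]⁻, and harmonic on 𝕊[𝕀]⁻. Then the maximum and minimum of u over cl 𝕊[𝕀]⁻ are attained on the boundary ∂𝕀: max_{cl 𝕊[𝕀]⁻} u = max_{∂𝕀} u and min_{cl 𝕊[𝕀]⁻} u = min_{∂𝕀} u. -/

import Mathlib

open MeasureTheory Real
open scoped BigOperators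

open Filter Set Metric
open scoped Topology

noncomputable section

/-- The point `q z` of the lattice `q ℤⁿ`. -/
def latticePt (n : ℕ) (qd : Fin n → ℝ) (z : Fin n → ℤ) : EuclideanSpace ℝ (Fin n) :=
  WithLp.toLp 2 (fun j => qd j * (z j : ℝ))

/-- The fundamental periodicity cell `Q = ∏_j (0, q_{jj})`. -/
def cellQ (n : ℕ) (qd : Fin n → ℝ) : Set (EuclideanSpace ℝ (Fin n)) :=
  {x | ∀ j, x j ∈ Set.Ioo 0 (qd j)}

/-- The periodically perforated domain `𝕊[𝕀]⁻ = ℝⁿ ∖ ⋃_{z ∈ ℤⁿ} cl(qz + 𝕀)`. -/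
def perfDom (n : ℕ) (qd : Fin n → ℝ) (I : Set (EuclideanSpace ℝ (Fin n))) :
    Set (EuclideanSpace ℝ (Fin n)) :=
  (⋃ z : Fin n → ℤ, closure ((latticePt n qd z + ·) '' I))ᶜ

/-- The Laplacian `Δu(x) = ∑_j ∂²u/∂x_j²(x)`. -/
def laplacian (n : ℕ) (u : EuclideanSpace ℝ (Fin n) → ℝ) (x : EuclideanSpace ℝ (Fin n)) : ℝ :=
  ∑ j : Fin n,
    fderiv ℝ (fun y => fderiv ℝ u y (EuclideanSpace.single j (1 : ℝ))) x
      (EuclideanSpace.single j (1 : ℝ))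

lemma second_deriv_test {g : ℝ → ℝ} {c : ℝ}
    (hg : ∀ᶠ t in 𝓝 (0:ℝ), DifferentiableAt ℝ g t)
    (hg2 : HasDerivAt (deriv g) c 0) (hmax : IsLocalMax g 0) : c ≤ 0 := by
  by_contra hc
  push_neg at hc
  have h0 : deriv g 0 = 0 := hmax.deriv_eq_zero
  have hslope : Tendsto (slope (deriv g) 0) (𝓝[≠] (0:ℝ)) (𝓝 c) :=
    hasDerivAt_iff_tendsto_slope.mp hg2
  have hev : ∀ᶠ t in 𝓝[≠] (0:ℝ), 0 < slope (deriv g) 0 t :=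
    hslope.eventually (eventually_gt_nhds hc)
  -- get a δ such that everything holds on ball
  have hcomb : ∀ᶠ t in 𝓝 (0:ℝ), (t ≠ 0 → 0 < slope (deriv g) 0 t) ∧ DifferentiableAt ℝ g t ∧ g t ≤ g 0 := by
    refine ((eventually_nhdsWithin_iff.mp hev).and (hg.and hmax)).mono ?_
    exact fun t ht => ⟨fun h => ht.1 h, ht.2.1, ht.2.2⟩
  obtain ⟨δ, hδ, hball⟩ := Metric.eventually_nhds_iff.mp hcomb
  set t₀ : ℝ := δ/2 with ht₀
  have ht₀pos : 0 < t₀ := by positivity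
  have ht₀δ : t₀ < δ := by simp [ht₀]; linarith
  have hsub : Icc (0:ℝ) t₀ ⊆ ball (0:ℝ) δ := by
    intro t ht
    simp only [mem_ball, Real.dist_eq]
    rw [sub_zero, abs_of_nonneg ht.1]; linarith [ht.2]
  have hmono : StrictMonoOn g (Icc 0 t₀) := by
    apply strictMonoOn_of_deriv_pos (convex_Icc _ _)
    · exact fun t ht => ((hball (mem_ball.mp (hsub ht))).2.1).continuousAt.continuousWithinAt
    · intro t ht
      rw [interior_Icc] at ht
      have hb := hball (mem_ball.mp (hsub ⟨le_of_lt ht.1, le_of_lt ht.2⟩))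
      have := hb.1 (ne_of_gt ht.1)
      have hs : slope (deriv g) 0 t = deriv g t / t := by
        simp [slope, h0]; ring
      rw [hs] at this
      have := mul_pos this ht.1
      rwa [div_mul_cancel₀] at this
      exact ne_of_gt ht.1
  have := hmono (left_mem_Icc.mpr (le_of_lt ht₀pos)) (right_mem_Icc.mpr (le_of_lt ht₀pos)) ht₀pos
  have hle := (hball (mem_ball.mp (hsub (right_mem_Icc.mpr (le_of_lt ht₀pos))))).2.2
  linarith

lemma directional_second_deriv_nonpos {n : ℕ} {U : Set (EuclideanSpace ℝ (Fin n))} (hU : IsOpen U)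
    {w : EuclideanSpace ℝ (Fin n) → ℝ} (hw : ContDiffOn ℝ 2 w U)
    {p : EuclideanSpace ℝ (Fin n)} (hp : p ∈ U) (hmax : IsLocalMax w p)
    (v : EuclideanSpace ℝ (Fin n)) :
    fderiv ℝ (fun y => fderiv ℝ w y v) p v ≤ 0 := by
  have hf' : ContDiffOn ℝ 1 (fderiv ℝ w) U := hw.fderiv_of_isOpen hU (by norm_num)
  have hdf : ∀ x ∈ U, DifferentiableAt ℝ (fun y => fderiv ℝ w y v) x := fun x hx =>
    (((hf'.differentiableOn one_ne_zero).differentiableAt (hU.mem_nhds hx))).clm_apply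
      (differentiableAt_const v)
  have hdw : ∀ x ∈ U, DifferentiableAt ℝ w x := fun x hx =>
    (hw.differentiableOn (by norm_num)).differentiableAt (hU.mem_nhds hx)
  set ℓ : ℝ → EuclideanSpace ℝ (Fin n) := fun t => p + t • v with hℓdef
  have hℓ : ∀ t, HasDerivAt ℓ v t := by
    intro t
    have := ((hasDerivAt_id t).smul_const v).const_add p
    rw [one_smul] at this
    exact this
  have ℓ0 : ℓ 0 = p := by simp [hℓdef]
  have hcont : Continuous ℓ := by fun_prop
  have hUt : ∀ᶠ t in 𝓝 (0:ℝ), ℓ t ∈ U := by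
    have : Tendsto ℓ (𝓝 0) (𝓝 p) := by
      simpa [ℓ0] using (hcont.tendsto 0)
    exact this.eventually (hU.eventually_mem hp)
  set g : ℝ → ℝ := fun t => w (ℓ t) with hgdef
  have hgdiff : ∀ᶠ t in 𝓝 (0:ℝ), HasDerivAt g (fderiv ℝ w (ℓ t) v) t :=
    hUt.mono fun t ht => ((hdw _ ht).hasFDerivAt.comp_hasDerivAt t (hℓ t))
  have hgd : ∀ᶠ t in 𝓝 (0:ℝ), DifferentiableAt ℝ g t :=
    hgdiff.mono fun t ht => ht.differentiableAt
  have hderiv_eq : deriv g =ᶠ[𝓝 (0:ℝ)] fun t => fderiv ℝ w (ℓ t) v :=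
    hgdiff.mono fun t ht => ht.deriv
  have h2 : HasDerivAt (fun t => fderiv ℝ w (ℓ t) v)
      (fderiv ℝ (fun y => fderiv ℝ w y v) p v) 0 := by
    have hd : DifferentiableAt ℝ (fun y => fderiv ℝ w y v) (ℓ 0) := by rw [ℓ0]; exact hdf p hp
    have := (hd.hasFDerivAt.comp_hasDerivAt 0 (hℓ 0))
    rw [ℓ0] at this
    exact this
  have h2' : HasDerivAt (deriv g) (fderiv ℝ (fun y => fderiv ℝ w y v) p v) 0 :=
    h2.congr_of_eventuallyEq hderiv_eq
  have hgmax : IsLocalMax g 0 := by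
    have ht : Tendsto ℓ (𝓝 0) (𝓝 p) := by simpa [ℓ0] using (hcont.tendsto 0)
    have := ht.eventually hmax
    simpa [IsLocalMax, IsMaxFilter, hgdef, ℓ0] using this
  exact second_deriv_test hgd h2' hgmax

lemma laplacian_nonpos_at_localMax {n : ℕ} {U : Set (EuclideanSpace ℝ (Fin n))} (hU : IsOpen U)
    {w : EuclideanSpace ℝ (Fin n) → ℝ} (hw : ContDiffOn ℝ 2 w U)
    {p : EuclideanSpace ℝ (Fin n)} (hp : p ∈ U) (hmax : IsLocalMax w p) :
    laplacian n w p ≤ 0 :=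
  Finset.sum_nonpos fun j _ => directional_second_deriv_nonpos hU hw hp hmax _

variable {n : ℕ}

def phiB (n : ℕ) (y x : EuclideanSpace ℝ (Fin n)) : ℝ := ∑ j, (x j - y j) ^ 2

def hbar (n : ℕ) (y : EuclideanSpace ℝ (Fin n)) (α : ℝ) (x : EuclideanSpace ℝ (Fin n)) : ℝ :=
  Real.exp (-α * phiB n y x)

def dmap (n : ℕ) (y x : EuclideanSpace ℝ (Fin n)) : EuclideanSpace ℝ (Fin n) →L[ℝ] ℝ :=
  ∑ j, (2 * (x j - y j)) • (EuclideanSpace.proj j : EuclideanSpace ℝ (Fin n) →L[ℝ] ℝ)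

lemma proj_hasFDerivAt (j : Fin n) (c : ℝ) (x : EuclideanSpace ℝ (Fin n)) :
    HasFDerivAt (fun x : EuclideanSpace ℝ (Fin n) => x j - c)
      (EuclideanSpace.proj (𝕜 := ℝ) j : EuclideanSpace ℝ (Fin n) →L[ℝ] ℝ) x := by
  have h0 : HasFDerivAt (fun x : EuclideanSpace ℝ (Fin n) => (EuclideanSpace.proj (𝕜 := ℝ) j) x)
      (EuclideanSpace.proj (𝕜 := ℝ) j : EuclideanSpace ℝ (Fin n) →L[ℝ] ℝ) x :=
    (EuclideanSpace.proj (𝕜 := ℝ) j).hasFDerivAt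
  simpa [PiLp.proj_apply] using h0.sub_const c

lemma phiB_hasFDerivAt (y x : EuclideanSpace ℝ (Fin n)) :
    HasFDerivAt (phiB n y) (dmap n y x) x := by
  have : ∀ j : Fin n, HasFDerivAt (fun x : EuclideanSpace ℝ (Fin n) => (x j - y j) ^ 2)
      ((2 * (x j - y j)) • (EuclideanSpace.proj j : EuclideanSpace ℝ (Fin n) →L[ℝ] ℝ)) x := by
    intro j
    have h1 := proj_hasFDerivAt j (y j) x
    have h2 : HasFDerivAt (fun x : EuclideanSpace ℝ (Fin n) => (x j - y j) ^ 2)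
        ((x j - y j) • (EuclideanSpace.proj (𝕜 := ℝ) j : EuclideanSpace ℝ (Fin n) →L[ℝ] ℝ)
          + (x j - y j) • (EuclideanSpace.proj (𝕜 := ℝ) j :
              EuclideanSpace ℝ (Fin n) →L[ℝ] ℝ)) x := by
      simpa [pow_two] using h1.fun_mul h1
    have heq : (2 * (x j - y j)) • (EuclideanSpace.proj (𝕜 := ℝ) j :
        EuclideanSpace ℝ (Fin n) →L[ℝ] ℝ)
        = (x j - y j) • (EuclideanSpace.proj (𝕜 := ℝ) j : EuclideanSpace ℝ (Fin n) →L[ℝ] ℝ)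
          + (x j - y j) • (EuclideanSpace.proj (𝕜 := ℝ) j :
              EuclideanSpace ℝ (Fin n) →L[ℝ] ℝ) := by
      rw [two_mul, add_smul]
    rw [heq]
    exact h2
  exact HasFDerivAt.fun_sum (fun j _ => this j)

lemma hbar_hasFDerivAt (y : EuclideanSpace ℝ (Fin n)) (α : ℝ) (x : EuclideanSpace ℝ (Fin n)) :
    HasFDerivAt (hbar n y α)
      ((Real.exp (-α * phiB n y x)) • ((-α) • dmap n y x)) x := by
  have h1 : HasFDerivAt (fun x => -α * phiB n y x) ((-α) • dmap n y x) x :=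
    (phiB_hasFDerivAt y x).const_mul (-α)
  exact h1.exp

lemma dmap_apply_single (y x : EuclideanSpace ℝ (Fin n)) (j : Fin n) :
    dmap n y x (EuclideanSpace.single j 1) = 2 * (x j - y j) := by
  simp only [dmap, ContinuousLinearMap.sum_apply, ContinuousLinearMap.smul_apply,
    PiLp.proj_apply, EuclideanSpace.single_apply]
  rw [Finset.sum_eq_single j]
  · simp
  · intro k _ hk
    simp [hk]
  · simp

lemma hbar_fderiv_single (y : EuclideanSpace ℝ (Fin n)) (α : ℝ) (x : EuclideanSpace ℝ (Fin n))
    (j : Fin n) :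
    fderiv ℝ (hbar n y α) x (EuclideanSpace.single j 1) =
      (-2 * α * (x j - y j)) * hbar n y α x := by
  rw [(hbar_hasFDerivAt y α x).fderiv]
  simp only [ContinuousLinearMap.smul_apply, dmap_apply_single, smul_eq_mul]
  unfold hbar
  ring

lemma laplacian_hbar (y : EuclideanSpace ℝ (Fin n)) (α : ℝ) (x : EuclideanSpace ℝ (Fin n)) :
    laplacian n (hbar n y α) x =
      (4 * α ^ 2 * phiB n y x - 2 * n * α) * hbar n y α x := by
  unfold laplacian
  have hterm : ∀ j : Fin n,
      fderiv ℝ (fun x' => fderiv ℝ (hbar n y α) x' (EuclideanSpace.single j 1)) x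
        (EuclideanSpace.single j 1)
      = (4 * α ^ 2 * (x j - y j) ^ 2 - 2 * α) * hbar n y α x := by
    intro j
    have heq : (fun x' => fderiv ℝ (hbar n y α) x' (EuclideanSpace.single j 1)) =
        fun x' => (-2 * α * (x' j - y j)) * hbar n y α x' := by
      funext x'
      exact hbar_fderiv_single y α x' j
    rw [heq]
    have h1 : HasFDerivAt (fun x' : EuclideanSpace ℝ (Fin n) => -2 * α * (x' j - y j))
        ((-2 * α) • (EuclideanSpace.proj (𝕜 := ℝ) j : EuclideanSpace ℝ (Fin n) →L[ℝ] ℝ)) x :=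
      (proj_hasFDerivAt j (y j) x).const_mul (-2 * α)
    have h2 := hbar_hasFDerivAt y α x
    have hprod := h1.fun_mul h2
    rw [hprod.fderiv]
    have hfd := hbar_fderiv_single y α x j
    simp only [ContinuousLinearMap.add_apply, ContinuousLinearMap.smul_apply,
      PiLp.proj_apply, EuclideanSpace.single_apply, smul_eq_mul]
    rw [dmap_apply_single]
    simp only [if_pos rfl, mul_one, if_true]
    unfold hbar
    norm_num
    ring
  rw [Finset.sum_congr rfl (fun j _ => hterm j), ← Finset.sum_mul]
  have hsum : ∑ i : Fin n, (4 * α ^ 2 * (x i - y i) ^ 2 - 2 * α)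
      = 4 * α ^ 2 * (∑ i : Fin n, (x i - y i) ^ 2) - n * (2 * α) := by
    rw [Finset.sum_sub_distrib, ← Finset.mul_sum, Finset.sum_const, Finset.card_univ,
      Fintype.card_fin, nsmul_eq_mul]
  rw [hsum]
  unfold phiB
  ring

-- new material
lemma phiB_eq_dist (y x : EuclideanSpace ℝ (Fin n)) : phiB n y x = dist x y ^ 2 := by
  rw [EuclideanSpace.dist_eq, Real.sq_sqrt]
  · unfold phiB
    congr 1
    funext i
    rw [Real.dist_eq, sq_abs]
  · positivity

lemma phiB_nonneg (y x : EuclideanSpace ℝ (Fin n)) : 0 ≤ phiB n y x := by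
  rw [phiB_eq_dist]; positivity

lemma hbar_pos (y : EuclideanSpace ℝ (Fin n)) (α : ℝ) (x : EuclideanSpace ℝ (Fin n)) :
    0 < hbar n y α x := Real.exp_pos _

lemma hbar_le_one (y : EuclideanSpace ℝ (Fin n)) {α : ℝ} (hα : 0 ≤ α)
    (x : EuclideanSpace ℝ (Fin n)) : hbar n y α x ≤ 1 := by
  unfold hbar
  rw [Real.exp_le_one_iff]
  have := phiB_nonneg y x
  nlinarith

lemma contDiff_hbar (y : EuclideanSpace ℝ (Fin n)) (α : ℝ) : ContDiff ℝ 2 (hbar n y α) := by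
  unfold hbar
  apply Real.contDiff_exp.comp
  apply ContDiff.mul contDiff_const
  unfold phiB
  apply ContDiff.sum
  intro j _
  exact ((EuclideanSpace.proj (𝕜 := ℝ) j).contDiff.sub contDiff_const).pow 2

lemma inner_fderiv_diff {U : Set (EuclideanSpace ℝ (Fin n))} (hU : IsOpen U)
    {w : EuclideanSpace ℝ (Fin n) → ℝ} (hw : ContDiffOn ℝ 2 w U)
    {p : EuclideanSpace ℝ (Fin n)} (hp : p ∈ U) (v : EuclideanSpace ℝ (Fin n)) :
    DifferentiableAt ℝ (fun y => fderiv ℝ w y v) p := by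
  have hf' : ContDiffOn ℝ 1 (fderiv ℝ w) U := hw.fderiv_of_isOpen hU (by norm_num)
  exact (((hf'.differentiableOn one_ne_zero).differentiableAt (hU.mem_nhds hp))).clm_apply
    (differentiableAt_const v)

lemma hbar_inner_differentiable (y : EuclideanSpace ℝ (Fin n)) (α : ℝ)
    (x : EuclideanSpace ℝ (Fin n)) (j : Fin n) :
    DifferentiableAt ℝ (fun x' => fderiv ℝ (hbar n y α) x' (EuclideanSpace.single j 1)) x := by
  apply inner_fderiv_diff isOpen_univ ((contDiff_hbar y α).contDiffOn) (mem_univ x)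

lemma laplacian_add_barrier {U : Set (EuclideanSpace ℝ (Fin n))} (hU : IsOpen U)
    {u : EuclideanSpace ℝ (Fin n) → ℝ} (hu2 : ContDiffOn ℝ 2 u U)
    {x : EuclideanSpace ℝ (Fin n)} (hx : x ∈ U) (ε c α : ℝ) (y : EuclideanSpace ℝ (Fin n)) :
    laplacian n (fun x' => u x' + ε * (hbar n y α x' - c)) x
      = laplacian n u x + ε * laplacian n (hbar n y α) x := by
  have hdu : ∀ x' ∈ U, DifferentiableAt ℝ u x' := fun x' hx' =>
    (hu2.differentiableOn (by norm_num)).differentiableAt (hU.mem_nhds hx')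
  unfold laplacian
  rw [Finset.mul_sum, ← Finset.sum_add_distrib]
  apply Finset.sum_congr rfl
  intro j _
  set v := EuclideanSpace.single j (1:ℝ) with hv
  have hstep1 : (fun x' => fderiv ℝ (fun x'' => u x'' + ε * (hbar n y α x'' - c)) x' v)
      =ᶠ[𝓝 x] (fun x' => fderiv ℝ u x' v + ε * fderiv ℝ (hbar n y α) x' v) := by
    filter_upwards [hU.eventually_mem hx] with x' hx'
    have hdb : HasFDerivAt (fun x'' => ε * (hbar n y α x'' - c))
        (ε • (Real.exp (-α * phiB n y x') • ((-α) • dmap n y x'))) x' :=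
      (((hbar_hasFDerivAt y α x').sub_const c).const_mul ε)
    rw [fderiv_fun_add (hdu x' hx') hdb.differentiableAt, hdb.fderiv]
    have : fderiv ℝ (hbar n y α) x' = Real.exp (-α * phiB n y x') • ((-α) • dmap n y x') :=
      (hbar_hasFDerivAt y α x').fderiv
    rw [this]
    simp
  rw [hstep1.fderiv_eq]
  have hA : DifferentiableAt ℝ (fun x' => fderiv ℝ u x' v) x := inner_fderiv_diff hU hu2 hx v
  have hB : DifferentiableAt ℝ (fun x' => fderiv ℝ (hbar n y α) x' v) x :=
    hbar_inner_differentiable y α x j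
  rw [fderiv_fun_add hA (hB.const_mul ε), fderiv_const_mul hB]
  simp

set_option maxHeartbeats 1000000 in
lemma maxset_isOpen (hn : 2 ≤ n) {U : Set (EuclideanSpace ℝ (Fin n))} (hU : IsOpen U)
    {u : EuclideanSpace ℝ (Fin n) → ℝ} (hu2 : ContDiffOn ℝ 2 u U)
    (hharm : ∀ x ∈ U, laplacian n u x = 0) {M : ℝ} (hle : ∀ x ∈ U, u x ≤ M) :
    IsOpen {x ∈ U | u x = M} := by
  haveI : Nontrivial (EuclideanSpace ℝ (Fin n)) := by
    haveI : NeZero n := ⟨by omega⟩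
    infer_instance
  rw [Metric.isOpen_iff]
  rintro p ⟨hpU, hpM⟩
  obtain ⟨R, hR, hRU⟩ := Metric.nhds_basis_closedBall.mem_iff.mp (hU.mem_nhds hpU)
  set r : ℝ := R / 4 with hrdef
  have hr : 0 < r := by positivity
  refine ⟨r, hr, ?_⟩
  intro x₁ hx₁
  have hcb2U : closedBall p (2 * r) ⊆ U := fun x hx =>
    hRU (closedBall_subset_closedBall (by linarith) hx)
  have hx₁U : x₁ ∈ U := hcb2U (by
    simp only [mem_closedBall]
    have := mem_ball.mp hx₁
    linarith)
  refine ⟨hx₁U, ?_⟩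
  by_contra hne
  have hx₁lt : u x₁ < M := lt_of_le_of_ne (hle _ hx₁U) hne
  -- the compact max set in the double ball
  set A : Set (EuclideanSpace ℝ (Fin n)) := closedBall p (2 * r) ∩ u ⁻¹' {M} with hAdef
  have hAclosed : IsClosed A :=
    (hu2.continuousOn.mono hcb2U).preimage_isClosed_of_isClosed Metric.isClosed_closedBall
      isClosed_singleton
  have hAcompact : IsCompact A :=
    (isCompact_closedBall p (2 * r)).of_isClosed_subset hAclosed inter_subset_left
  have hAne : A.Nonempty := ⟨p, by
    simp only [hAdef, mem_inter_iff, mem_closedBall, mem_preimage, mem_singleton_iff]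
    exact ⟨by rw [dist_self]; positivity, hpM⟩⟩
  have hx₁A : x₁ ∉ A := by
    intro h
    exact absurd (h.2 : u x₁ = M) hne
  set r₁ : ℝ := infDist x₁ A with hr₁def
  have hr₁pos : 0 < r₁ := (hAclosed.notMem_iff_infDist_pos hAne).1 hx₁A
  obtain ⟨p', hp'A, hp'dist⟩ := hAcompact.exists_infDist_eq_dist hAne x₁
  have hr₁r : r₁ < r := by
    have h1 : r₁ ≤ dist x₁ p := infDist_le_dist_of_mem (by
      simp only [hAdef, mem_inter_iff, mem_closedBall, mem_preimage, mem_singleton_iff]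
      exact ⟨by rw [dist_self]; positivity, hpM⟩)
    have := mem_ball.mp hx₁
    linarith
  -- points strictly inside ball x₁ r₁ have u < M
  have hBlt : ∀ x, dist x x₁ < r₁ → u x < M := by
    intro x hx
    have hxcb : x ∈ closedBall p (2 * r) := by
      simp only [mem_closedBall]
      have h1 : dist x p ≤ dist x x₁ + dist x₁ p := dist_triangle _ _ _
      have h2 := mem_ball.mp hx₁
      linarith
    refine lt_of_le_of_ne (hle _ (hcb2U hxcb)) ?_
    intro hM
    have hxA : x ∈ A := ⟨hxcb, by simpa using hM⟩
    have hinf : infDist x₁ A ≤ dist x₁ x := infDist_le_dist_of_mem hxA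
    rw [← hr₁def] at hinf
    rw [dist_comm] at hx
    linarith
  -- max of u on the inner sphere
  have hsph : IsCompact (sphere x₁ (r₁ / 2)) := isCompact_sphere _ _
  have hsphne : (sphere x₁ (r₁ / 2)).Nonempty := NormedSpace.sphere_nonempty.mpr (by positivity)
  have hsphU : sphere x₁ (r₁ / 2) ⊆ U := by
    intro x hx
    have hdx : dist x x₁ = r₁ / 2 := mem_sphere.mp hx
    apply hcb2U
    simp only [mem_closedBall]
    have h1 : dist x p ≤ dist x x₁ + dist x₁ p := dist_triangle _ _ _
    have h2 := mem_ball.mp hx₁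
    linarith
  obtain ⟨m₀, hm₀S, hm₀max⟩ := hsph.exists_isMaxOn hsphne (hu2.continuousOn.mono hsphU)
  set δ : ℝ := M - u m₀ with hδdef
  have hδpos : 0 < δ := by
    have : u m₀ < M := hBlt m₀ (by
      have := mem_sphere.mp hm₀S
      rw [this]; linarith)
    simp only [hδdef]; linarith
  -- the barrier parameters
  set α : ℝ := (2 * n + 1) / r₁ ^ 2 with hαdef
  have hαpos : 0 < α := by positivity
  have hαr₁ : α * r₁ ^ 2 = 2 * n + 1 := by
    rw [hαdef, div_mul_cancel₀ _ (by positivity)]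
  set ε : ℝ := δ / 2 with hεdef
  have hεpos : 0 < ε := by positivity
  set c : ℝ := Real.exp (-α * r₁ ^ 2) with hcdef
  set w : EuclideanSpace ℝ (Fin n) → ℝ := fun x => u x + ε * (hbar n x₁ α x - c) with hwdef
  have hw2 : ContDiffOn ℝ 2 w U := by
    apply hu2.add
    exact (contDiff_const.mul ((contDiff_hbar x₁ α).sub contDiff_const)).contDiffOn
  -- the annulus
  set Ann : Set (EuclideanSpace ℝ (Fin n)) := closedBall x₁ r₁ \ ball x₁ (r₁ / 2) with hAnndef
  have hAnnU : Ann ⊆ U := by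
    intro x hx
    apply hcb2U
    simp only [mem_closedBall]
    have h1 : dist x p ≤ dist x x₁ + dist x₁ p := dist_triangle _ _ _
    have h2 := mem_ball.mp hx₁
    have h3 := mem_closedBall.mp hx.1
    linarith
  have hAnncomp : IsCompact Ann := (isCompact_closedBall _ _).diff isOpen_ball
  have hp'dist' : dist p' x₁ = r₁ := by rw [dist_comm, ← hp'dist]
  have hp'Ann : p' ∈ Ann := by
    constructor
    · simp only [mem_closedBall]; rw [hp'dist']
    · simp only [mem_ball, not_lt]; rw [hp'dist']; linarith
  have hAnnne : Ann.Nonempty := ⟨p', hp'Ann⟩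
  obtain ⟨m, hmAnn, hmmax⟩ := hAnncomp.exists_isMaxOn hAnnne
    ((hw2.continuousOn).mono hAnnU)
  have hup' : u p' = M := by simpa using hp'A.2
  have hphip' : phiB n x₁ p' = r₁ ^ 2 := by rw [phiB_eq_dist, hp'dist']
  have hwp' : w p' = M := by
    simp only [hwdef, hup']
    have : hbar n x₁ α p' = c := by
      simp only [hcdef]; unfold hbar; rw [hphip']
    rw [this]; ring
  have hwmM : M ≤ w m := by
    have := hmmax hp'Ann
    simpa [hwp'] using this
  -- m cannot be in the open annulus
  have hlapw : ∀ x ∈ U, r₁ / 2 ≤ dist x x₁ →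
      laplacian n w x = ε * ((4 * α ^ 2 * phiB n x₁ x - 2 * n * α) * hbar n x₁ α x) := by
    intro x hxU _
    rw [laplacian_add_barrier hU hu2 hxU ε c α x₁, hharm x hxU, laplacian_hbar]
    ring
  have hlapw_pos : ∀ x ∈ U, r₁ / 2 ≤ dist x x₁ → 0 < laplacian n w x := by
    intro x hxU hdist
    rw [hlapw x hxU hdist]
    have hphi : (r₁ / 2) ^ 2 ≤ phiB n x₁ x := by
      rw [phiB_eq_dist]
      apply pow_le_pow_left₀ (by positivity) hdist
    have hbpos := hbar_pos x₁ α x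
    have key : 0 < 4 * α ^ 2 * phiB n x₁ x - 2 * n * α := by
      have h1 : 4 * α ^ 2 * phiB n x₁ x ≥ 4 * α ^ 2 * ((r₁/2) ^ 2) := by nlinarith
      have h2 : 4 * α ^ 2 * ((r₁/2) ^ 2) = α * (α * r₁ ^ 2) := by ring
      rw [hαr₁] at h2
      have hn' : (0:ℝ) < n := by
        have : (2:ℝ) ≤ n := by exact_mod_cast hn
        linarith
      nlinarith
    positivity
  have hmnotopen : ¬ (dist m x₁ < r₁ ∧ r₁ / 2 < dist m x₁) := by
    rintro ⟨h1, h2⟩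
    set O : Set (EuclideanSpace ℝ (Fin n)) := ball x₁ r₁ \ closedBall x₁ (r₁ / 2) with hOdef
    have hOopen : IsOpen O := isOpen_ball.sdiff Metric.isClosed_closedBall
    have hmO : m ∈ O := ⟨mem_ball.mpr h1, by simp only [mem_closedBall, not_le]; exact h2⟩
    have hOAnn : O ⊆ Ann := by
      rintro x ⟨hx1, hx2⟩
      exact ⟨ball_subset_closedBall hx1, fun hx3 => hx2 (ball_subset_closedBall hx3)⟩
    have hlocmax : IsLocalMax w m := hmmax.isLocalMax
      (Filter.mem_of_superset (hOopen.mem_nhds hmO) hOAnn)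
    have := laplacian_nonpos_at_localMax hU hw2 (hAnnU hmAnn) hlocmax
    have hpos := hlapw_pos m (hAnnU hmAnn) (le_of_lt h2)
    linarith
  -- so m is on one of the two spheres
  have hmcases : dist m x₁ = r₁ ∨ dist m x₁ = r₁ / 2 := by
    have h1 : dist m x₁ ≤ r₁ := mem_closedBall.mp hmAnn.1
    have h2 : r₁ / 2 ≤ dist m x₁ := by
      have := hmAnn.2
      simp only [mem_ball, not_lt] at this
      exact this
    rcases eq_or_lt_of_le h1 with h | h
    · left; exact h
    rcases eq_or_lt_of_le h2 with h' | h'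
    · right; exact h'.symm
    · exact absurd ⟨h, h'⟩ hmnotopen
  have hwAnnle : ∀ x ∈ Ann, w x ≤ M := by
    rcases hmcases with h | h
    · -- outer sphere: w m = u m ≤ M
      have hwm : w m = u m := by
        simp only [hwdef]
        have : hbar n x₁ α m = c := by
          simp only [hcdef]; unfold hbar
          rw [phiB_eq_dist, h]
        rw [this]; ring
      intro x hx
      calc w x ≤ w m := hmmax hx
        _ = u m := hwm
        _ ≤ M := hle _ (hAnnU hmAnn)
    · -- inner sphere: contradiction
      exfalso
      have hum : u m ≤ u m₀ := hm₀max (mem_sphere.mpr h)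
      have hbm : hbar n x₁ α m - c ≤ 1 := by
        have := hbar_le_one x₁ (le_of_lt hαpos) m
        have hc : 0 < c := Real.exp_pos _
        linarith
      have : w m ≤ M - δ + ε := by
        simp only [hwdef]
        have : ε * (hbar n x₁ α m - c) ≤ ε * 1 := by
          apply mul_le_mul_of_nonneg_left hbm (le_of_lt hεpos)
        simp only [hδdef] at *
        nlinarith
      have hcontr : M ≤ M - δ + ε := le_trans hwmM this
      rw [hεdef] at hcontr
      linarith [hδpos, hcontr]
  -- Hopf boundary argument at p'
  set v : EuclideanSpace ℝ (Fin n) := p' - x₁ with hvdef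
  set ψ : ℝ → ℝ := fun t => w (x₁ + t • v) with hψdef
  have hnormv : ‖v‖ = r₁ := by
    rw [hvdef, ← dist_eq_norm, hp'dist']
  have hseg : ∀ t ∈ Icc (1/2 : ℝ) 1, x₁ + t • v ∈ Ann := by
    intro t ht
    have hdist : dist (x₁ + t • v) x₁ = t * r₁ := by
      rw [dist_eq_norm]
      simp only [add_sub_cancel_left]
      rw [norm_smul, hnormv, Real.norm_eq_abs, abs_of_nonneg (by linarith [ht.1])]
    constructor
    · simp only [mem_closedBall, hdist]
      nlinarith [ht.2, hr₁pos]
    · simp only [mem_ball, not_lt, hdist]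
      nlinarith [ht.1, hr₁pos]
  have hψle : ∀ t ∈ Icc (1/2 : ℝ) 1, ψ t ≤ M := fun t ht => hwAnnle _ (hseg t ht)
  have hx₁v : x₁ + (1:ℝ) • v = p' := by rw [one_smul, hvdef]; abel
  have hψ1 : ψ 1 = M := by
    show w (x₁ + (1:ℝ) • v) = M
    rw [hx₁v]; exact hwp'
  -- derivative of ψ at 1
  have hfderivu0 : fderiv ℝ u p' = 0 := by
    apply IsLocalMax.fderiv_eq_zero
    have hp'U : p' ∈ U := hcb2U hp'A.1
    filter_upwards [hU.eventually_mem hp'U] with x hx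
    rw [hup']
    exact hle _ hx
  have hlineAt : HasDerivAt (fun t : ℝ => x₁ + t • v) v 1 := by
    simpa using ((hasDerivAt_id (1:ℝ)).smul_const v).const_add x₁
  have hwderiv : HasFDerivAt w
      (fderiv ℝ u p' + ε • (Real.exp (-α * phiB n x₁ p') • ((-α) • dmap n x₁ p'))) p' := by
    have hdu : HasFDerivAt u (fderiv ℝ u p') p' :=
      ((hu2.differentiableOn (by norm_num)).differentiableAt
        (hU.mem_nhds (hcb2U hp'A.1))).hasFDerivAt
    exact hdu.add (((hbar_hasFDerivAt x₁ α p').sub_const c).const_mul ε)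
  have hdmapv : dmap n x₁ p' v = 2 * r₁ ^ 2 := by
    have : dmap n x₁ p' v = ∑ j : Fin n, 2 * (p' j - x₁ j) * v j := by
      simp only [dmap, ContinuousLinearMap.sum_apply, ContinuousLinearMap.smul_apply,
        PiLp.proj_apply, smul_eq_mul]
    rw [this]
    have hv : ∀ j, v j = p' j - x₁ j := fun j => rfl
    have : ∑ j : Fin n, 2 * (p' j - x₁ j) * v j = 2 * phiB n x₁ p' := by
      unfold phiB
      rw [Finset.mul_sum]
      apply Finset.sum_congr rfl
      intro j _
      rw [hv j]; ring
    rw [this, hphip']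
  set d : ℝ := ε * (Real.exp (-α * r₁ ^ 2) * (-α * (2 * r₁ ^ 2))) with hddef
  have hψderiv : HasDerivAt ψ d 1 := by
    have hwderiv' := hwderiv
    rw [← hx₁v] at hwderiv'
    have hcomp := hwderiv'.comp_hasDerivAt 1 hlineAt
    rw [hx₁v] at hcomp
    have happ : (fderiv ℝ u p' + ε • (Real.exp (-α * phiB n x₁ p') • ((-α) • dmap n x₁ p'))) v
        = d := by
      simp only [ContinuousLinearMap.add_apply, ContinuousLinearMap.smul_apply, smul_eq_mul,
        hfderivu0, ContinuousLinearMap.zero_apply, hdmapv, hphip', hddef]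
      ring
    rw [← happ]
    exact hcomp
  have hdneg : d < 0 := by
    have h1 : 0 < Real.exp (-α * r₁ ^ 2) := Real.exp_pos _
    have h2 : -α * (2 * r₁ ^ 2) < 0 := by nlinarith
    rw [hddef]
    exact mul_neg_of_pos_of_neg hεpos (mul_neg_of_pos_of_neg h1 h2)
  -- but the one-sided derivative is nonneg
  have hdge : 0 ≤ d := by
    have hslope : Tendsto (slope ψ 1) (𝓝[≠] (1:ℝ)) (𝓝 d) :=
      hasDerivAt_iff_tendsto_slope.mp hψderiv
    have hmono : 𝓝[<] (1:ℝ) ≤ 𝓝[≠] (1:ℝ) :=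
      nhdsWithin_mono 1 fun t ht => ne_of_lt ht
    have hslope' : Tendsto (slope ψ 1) (𝓝[<] (1:ℝ)) (𝓝 d) := hslope.mono_left hmono
    apply ge_of_tendsto hslope'
    filter_upwards [Ico_mem_nhdsLT (show (1/2:ℝ) < 1 by norm_num)] with t ht
    have hψt : ψ t ≤ M := hψle t ⟨ht.1, le_of_lt ht.2⟩
    have hsl : slope ψ 1 t = (ψ t - ψ 1) / (t - 1) := slope_def_field ψ 1 t
    rw [hsl, hψ1]
    exact div_nonneg_iff.mpr (Or.inr ⟨by linarith, by linarith [ht.2]⟩)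
  linarith

variable {n : ℕ} {qd : Fin n → ℝ} {I : Set (EuclideanSpace ℝ (Fin n))}

lemma closure_image_add (c : EuclideanSpace ℝ (Fin n)) (S : Set (EuclideanSpace ℝ (Fin n))) :
    closure ((c + ·) '' S) = (c + ·) '' closure S :=
  ((Homeomorph.addLeft c).image_closure S).symm

lemma mem_image_add_iff {c x : EuclideanSpace ℝ (Fin n)} {S : Set (EuclideanSpace ℝ (Fin n))} :
    x ∈ (c + ·) '' S ↔ x - c ∈ S := by
  constructor
  · rintro ⟨y, hy, rfl⟩
    simpa using hy
  · intro h
    exact ⟨x - c, h, by module⟩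

lemma latticePt_add (z z' : Fin n → ℤ) :
    latticePt n qd (z + z') = latticePt n qd z + latticePt n qd z' := by
  ext k
  show qd k * ((z k + z' k : ℤ) : ℝ) = qd k * (z k : ℝ) + qd k * (z' k : ℝ)
  push_cast
  ring

lemma latticePt_neg (z : Fin n → ℤ) : latticePt n qd (-z) = -latticePt n qd z := by
  ext k
  show qd k * ((-(z k) : ℤ) : ℝ) = -(qd k * (z k : ℝ))
  push_cast
  ring

lemma latticePt_zero : latticePt n qd 0 = 0 := by
  ext k
  show qd k * ((0 : ℤ) : ℝ) = 0
  simp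

lemma mem_perfDom_iff {x : EuclideanSpace ℝ (Fin n)} :
    x ∈ perfDom n qd I ↔ ∀ z, x - latticePt n qd z ∉ closure I := by
  unfold perfDom
  simp only [mem_compl_iff, mem_iUnion, not_exists]
  constructor
  · intro h z hz
    exact h z (by rw [closure_image_add]; exact mem_image_add_iff.mpr hz)
  · intro h z hz
    rw [closure_image_add] at hz
    exact h z (mem_image_add_iff.mp hz)

lemma perfDom_shift (z : Fin n → ℤ) {x : EuclideanSpace ℝ (Fin n)} :
    x + latticePt n qd z ∈ perfDom n qd I ↔ x ∈ perfDom n qd I := by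
  rw [mem_perfDom_iff, mem_perfDom_iff]
  constructor
  · intro h z'
    have := h (z' + z)
    rwa [latticePt_add, show x + latticePt n qd z - (latticePt n qd z' + latticePt n qd z)
      = x - latticePt n qd z' by abel] at this
  · intro h z'
    have := h (z' - z)
    rwa [show z' - z = z' + (-z) by ring, latticePt_add, latticePt_neg,
      show x - (latticePt n qd z' + -latticePt n qd z)
      = x + latticePt n qd z - latticePt n qd z' by abel] at this

lemma perfDom_image_shift (z : Fin n → ℤ) :
    (latticePt n qd z + ·) '' (perfDom n qd I) = perfDom n qd I := by
  ext x
  rw [mem_image_add_iff]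
  constructor
  · intro h
    have := (perfDom_shift (I := I) z (x := x - latticePt n qd z)).mpr h
    rwa [show x - latticePt n qd z + latticePt n qd z = x by abel] at this
  · intro h
    apply (perfDom_shift (I := I) z).mp
    rwa [show x - latticePt n qd z + latticePt n qd z = x by abel]

lemma closure_perfDom_shift (z : Fin n → ℤ) {x : EuclideanSpace ℝ (Fin n)} :
    x ∈ closure (perfDom n qd I) → x + latticePt n qd z ∈ closure (perfDom n qd I) := by
  intro hx
  have himg : (latticePt n qd z + ·) '' closure (perfDom n qd I) = closure (perfDom n qd I) := by
    rw [← closure_image_add, perfDom_image_shift]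
  rw [← himg]
  exact ⟨x, hx, by module⟩

lemma smul_single_eq_latticePt (m : ℤ) (j : Fin n) :
    (m : ℝ) • EuclideanSpace.single j (qd j) = latticePt n qd (fun k => if k = j then m else 0) := by
  ext k
  show (m : ℝ) * (EuclideanSpace.single j (qd j)) k = qd k * (((if k = j then m else 0) : ℤ) : ℝ)
  rw [EuclideanSpace.single_apply]
  by_cases hkj : k = j
  · subst hkj; simp [mul_comm]
  · simp [hkj]

variable {u : EuclideanSpace ℝ (Fin n) → ℝ}

lemma mem_clD_shift (z : Fin n → ℤ) {x : EuclideanSpace ℝ (Fin n)}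
    (hx : x ∈ closure (perfDom n qd I)) :
    x + latticePt n qd z ∈ closure (perfDom n qd I) := closure_perfDom_shift z hx

lemma u_shift_int
    (hper : ∀ x ∈ closure (perfDom n qd I), ∀ j : Fin n,
      u (x + EuclideanSpace.single j (qd j)) = u x)
    (j : Fin n) : ∀ (m : ℤ), ∀ x ∈ closure (perfDom n qd I),
      u (x + (m : ℝ) • EuclideanSpace.single j (qd j)) = u x := by
  set s : EuclideanSpace ℝ (Fin n) := EuclideanSpace.single j (qd j) with hs
  have hmemshift : ∀ (m : ℤ) (x : EuclideanSpace ℝ (Fin n)),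
      x ∈ closure (perfDom n qd I) → x + (m : ℝ) • s ∈ closure (perfDom n qd I) := by
    intro m x hx
    have := mem_clD_shift (I := I) (fun k' => if k' = j then m else 0) hx
    rwa [← smul_single_eq_latticePt] at this
  have hstep_down : ∀ x ∈ closure (perfDom n qd I), u (x - s) = u x := by
    intro x hx
    have hmem : x - s ∈ closure (perfDom n qd I) := by
      have := hmemshift (-1) x hx
      rwa [show x + ((-1 : ℤ) : ℝ) • s = x - s by push_cast; module] at this
    have h2 := hper (x - s) hmem j
    rw [show (x - s) + s = x by module] at h2
    exact h2.symm
  intro m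
  induction m using Int.induction_on with
  | zero => intro x hx; norm_num
  | succ k ih =>
    intro x hx
    calc u (x + (((k : ℤ) + 1 : ℤ) : ℝ) • s)
        = u ((x + (((k : ℤ) : ℤ) : ℝ) • s) + s) := by
          rw [show x + (((k : ℤ) + 1 : ℤ) : ℝ) • s = (x + (((k : ℤ) : ℤ) : ℝ) • s) + s by
            push_cast; module]
      _ = u (x + (((k : ℤ) : ℤ) : ℝ) • s) := hper _ (hmemshift _ x hx) j
      _ = u x := ih x hx
  | pred k ih =>
    intro x hx
    calc u (x + ((-(k : ℤ) - 1 : ℤ) : ℝ) • s)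
        = u ((x + ((-(k : ℤ) : ℤ) : ℝ) • s) - s) := by
          rw [show x + ((-(k : ℤ) - 1 : ℤ) : ℝ) • s = (x + ((-(k : ℤ) : ℤ) : ℝ) • s) - s by
            push_cast; module]
      _ = u (x + ((-(k : ℤ) : ℤ) : ℝ) • s) := hstep_down _ (hmemshift _ x hx)
      _ = u x := ih x hx

lemma u_shift
    (hper : ∀ x ∈ closure (perfDom n qd I), ∀ j : Fin n,
      u (x + EuclideanSpace.single j (qd j)) = u x)
    (z : Fin n → ℤ) : ∀ x ∈ closure (perfDom n qd I),
      u (x + latticePt n qd z) = u x := by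
  suffices h : ∀ S : Finset (Fin n), ∀ x ∈ closure (perfDom n qd I),
      u (x + latticePt n qd (fun k => if k ∈ S then z k else 0)) = u x by
    intro x hx
    have := h Finset.univ x hx
    simpa using this
  intro S
  induction S using Finset.induction_on with
  | empty =>
    intro x hx
    have : (fun k => if k ∈ (∅ : Finset (Fin n)) then z k else 0) = (0 : Fin n → ℤ) := by
      funext k; simp
    rw [this, latticePt_zero, add_zero]
  | insert a S hnotmem ih =>
    intro x hx
    have hdecomp : latticePt n qd (fun k => if k ∈ insert a S then z k else 0)
        = latticePt n qd (fun k => if k ∈ S then z k else 0)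
          + ((z a : ℤ) : ℝ) • EuclideanSpace.single a (qd a) := by
      have hzfun : (fun k => if k ∈ insert a S then z k else 0)
          = ((fun k => if k ∈ S then z k else 0) + fun k' => if k' = a then z a else 0
            : Fin n → ℤ) := by
        funext k
        simp only [Finset.mem_insert, Pi.add_apply]
        by_cases hka : k = a
        · subst hka; simp [hnotmem]
        · simp [hka]
      rw [smul_single_eq_latticePt, hzfun, latticePt_add]
    rw [hdecomp, show x + (latticePt n qd (fun k => if k ∈ S then z k else 0)
        + ((z a : ℤ) : ℝ) • EuclideanSpace.single a (qd a))
        = (x + ((z a : ℤ) : ℝ) • EuclideanSpace.single a (qd a))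
          + latticePt n qd (fun k => if k ∈ S then z k else 0) by module]
    have hxmem : x + ((z a : ℤ) : ℝ) • EuclideanSpace.single a (qd a)
        ∈ closure (perfDom n qd I) := by
      have := mem_clD_shift (I := I) (fun k' => if k' = a then z a else 0) hx
      rwa [← smul_single_eq_latticePt] at this
    rw [ih _ hxmem]
    exact u_shift_int hper a (z a) x hx

lemma abs_coord_le_norm (y : EuclideanSpace ℝ (Fin n)) (j : Fin n) : |y j| ≤ ‖y‖ := by
  rw [EuclideanSpace.norm_eq]
  rw [show |y j| = Real.sqrt (|y j| ^ 2) by rw [Real.sqrt_sq (abs_nonneg _)]]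
  apply Real.sqrt_le_sqrt
  rw [sq_abs]
  have : (y j) ^ 2 = ‖y j‖ ^ 2 := by rw [Real.norm_eq_abs, sq_abs]
  rw [this]
  exact Finset.single_le_sum (f := fun i => ‖y i‖ ^ 2) (fun i _ => by positivity)
    (Finset.mem_univ j)

lemma perfDom_isOpen (hqd : ∀ j, 0 < qd j) (hIQ : closure I ⊆ cellQ n qd) :
    IsOpen (perfDom n qd I) := by
  rw [isOpen_iff_mem_nhds]
  intro x hx
  set R : ℝ := ‖x‖ + 1 with hR
  set C : Fin n → ℤ := fun j => ⌈(R + qd j) / qd j⌉ with hC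
  set F : Set (Fin n → ℤ) := Set.Icc (fun j => -(C j)) C with hF
  have hFfin : F.Finite := Set.finite_Icc _ _
  have hkey : ∀ z : Fin n → ℤ, z ∉ F →
      closure ((latticePt n qd z + ·) '' I) ∩ ball x 1 = ∅ := by
    intro z hz
    rw [Set.eq_empty_iff_forall_notMem]
    rintro y ⟨hy1, hy2⟩
    apply hz
    rw [closure_image_add] at hy1
    have hyI : y - latticePt n qd z ∈ cellQ n qd := hIQ (mem_image_add_iff.mp hy1)
    constructor <;> intro j <;> simp only <;>
    · have h1 : 0 < (y - latticePt n qd z) j := (hyI j).1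
      have h2 : (y - latticePt n qd z) j < qd j := (hyI j).2
      have hsub : (y - latticePt n qd z) j = y j - qd j * (z j : ℝ) := rfl
      rw [hsub] at h1 h2
      have hyj : |y j| ≤ R := by
        have h3 : |y j| ≤ ‖y‖ := abs_coord_le_norm y j
        have h4 : ‖y‖ ≤ ‖x‖ + dist y x := by
          rw [dist_eq_norm]
          calc ‖y‖ = ‖x + (y - x)‖ := by congr 1; abel
            _ ≤ ‖x‖ + ‖y - x‖ := norm_add_le _ _
        have h5 : dist y x < 1 := mem_ball.mp hy2
        rw [hR]; linarith
      have habs : |qd j * (z j : ℝ)| ≤ R + qd j := by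
        rw [abs_le]
        constructor
        · have := abs_le.mp hyj
          nlinarith [hqd j]
        · have := abs_le.mp hyj
          nlinarith [hqd j]
      have hqdj := hqd j
      have hzj : |(z j : ℝ)| ≤ (R + qd j) / qd j := by
        rw [le_div_iff₀ hqdj]
        rw [abs_mul, abs_of_pos hqdj] at habs
        linarith [habs]
      have hceil : ((z j : ℝ)) ≤ (C j : ℝ) ∧ (-(C j) : ℝ) ≤ (z j : ℝ) := by
        have hle : ((R + qd j) / qd j : ℝ) ≤ (C j : ℝ) := Int.le_ceil _
        have := abs_le.mp hzj
        constructor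
        · linarith [this.2]
        · push_cast
          linarith [this.1]
      first
        | exact_mod_cast hceil.2
        | exact_mod_cast hceil.1
  set K : Set (EuclideanSpace ℝ (Fin n)) :=
    ⋃ z ∈ F, closure ((latticePt n qd z + ·) '' I) with hK
  have hKclosed : IsClosed K := hFfin.isClosed_biUnion fun z _ => isClosed_closure
  have hxK : x ∉ K := by
    intro hxk
    rw [hK] at hxk
    obtain ⟨z, _, hz⟩ := mem_iUnion₂.mp hxk
    exact hx (mem_iUnion.mpr ⟨z, hz⟩)
  have hV : ball x 1 ∩ Kᶜ ∈ 𝓝 x :=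
    Filter.inter_mem (ball_mem_nhds x one_pos) (hKclosed.isOpen_compl.mem_nhds hxK)
  apply Filter.mem_of_superset hV
  rintro y ⟨hy1, hy2⟩
  intro hyU
  obtain ⟨z, hz⟩ := mem_iUnion.mp hyU
  by_cases hzF : z ∈ F
  · exact hy2 (mem_iUnion₂.mpr ⟨z, hzF, hz⟩)
  · have := hkey z hzF
    rw [Set.eq_empty_iff_forall_notMem] at this
    exact this y ⟨hz, hy1⟩

lemma zero_mem_perfDom (hn : 0 < n) (hqd : ∀ j, 0 < qd j)
    (hIQ : closure I ⊆ cellQ n qd) :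
    (0 : EuclideanSpace ℝ (Fin n)) ∈ perfDom n qd I := by
  rw [mem_perfDom_iff]
  intro z hz
  have h := hIQ hz
  obtain ⟨j⟩ := Fin.pos_iff_nonempty.mp hn
  have h1 := (h j).1
  have h2 := (h j).2
  have hsub : ((0 : EuclideanSpace ℝ (Fin n)) - latticePt n qd z) j
      = -(qd j * (z j : ℝ)) := by
    show (0 : ℝ) - qd j * (z j : ℝ) = _
    ring
  rw [hsub] at h1 h2
  have hqdj := hqd j
  rcases lt_trichotomy (z j) 0 with hzj | hzj | hzj
  · have hz1 : z j ≤ -1 := by omega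
    have : (z j : ℝ) ≤ -1 := by exact_mod_cast hz1
    nlinarith
  · rw [hzj] at h1; norm_num at h1
  · have hz1 : 1 ≤ z j := by omega
    have : (1 : ℝ) ≤ (z j : ℝ) := by exact_mod_cast hz1
    nlinarith


lemma boundary_output (hIo : IsOpen I)
    (hper : ∀ x ∈ closure (perfDom n qd I), ∀ j : Fin n,
      u (x + EuclideanSpace.single j (qd j)) = u x)
    {b : EuclideanSpace ℝ (Fin n)} (hb : b ∈ closure (perfDom n qd I))
    (hbn : b ∉ perfDom n qd I) :
    ∃ x₀ ∈ frontier I, u x₀ = u b := by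
  have hz : ∃ z, b - latticePt n qd z ∈ closure I := by
    by_contra h
    push_neg at h
    exact hbn (mem_perfDom_iff.mpr h)
  obtain ⟨z, hwcl⟩ := hz
  set w := b - latticePt n qd z with hw
  have hwnotI : w ∉ I := by
    intro hwI
    have himg : b ∈ (latticePt n qd z + ·) '' I := mem_image_add_iff.mpr hwI
    have hOopen : IsOpen ((latticePt n qd z + ·) '' I) :=
      (Homeomorph.addLeft (latticePt n qd z)).isOpen_image.mpr hIo
    obtain ⟨y, hy1, hy2⟩ := mem_closure_iff.mp hb _ hOopen himg
    exact hy2 (mem_iUnion.mpr ⟨z, subset_closure hy1⟩)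
  refine ⟨w, ?_, ?_⟩
  · rw [frontier, hIo.interior_eq]
    exact ⟨hwcl, hwnotI⟩
  · have : w = b + latticePt n qd (-z) := by
      rw [latticePt_neg, hw]
      module
    rw [this]
    exact u_shift hper (-z) b hb

lemma aux_max (hn : 2 ≤ n) (hqd : ∀ j, 0 < qd j)
    (hIne : I.Nonempty) (hIo : IsOpen I) (hIQ : closure I ⊆ cellQ n qd)
    (hu : ContinuousOn u (closure (perfDom n qd I)))
    (hper : ∀ x ∈ closure (perfDom n qd I), ∀ j : Fin n,
      u (x + EuclideanSpace.single j (qd j)) = u x)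
    (hC2 : ContDiffOn ℝ 2 u (perfDom n qd I))
    (hharm : ∀ x ∈ perfDom n qd I, laplacian n u x = 0) :
    ∃ x₀ ∈ frontier I, ∀ x ∈ closure (perfDom n qd I), u x ≤ u x₀ := by
  set D := perfDom n qd I with hDdef
  have hD : IsOpen D := perfDom_isOpen hqd hIQ
  have h0D : (0 : EuclideanSpace ℝ (Fin n)) ∈ D := zero_mem_perfDom (by omega) hqd hIQ
  -- compact fundamental box
  set B : Set (EuclideanSpace ℝ (Fin n)) := ⋂ j, {x | x j ∈ Icc 0 (qd j)} with hBdef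
  have hBclosed : IsClosed B := isClosed_iInter fun j =>
    IsClosed.preimage (EuclideanSpace.proj (𝕜 := ℝ) j).continuous isClosed_Icc
  have hBbdd : B ⊆ closedBall 0 (Real.sqrt (∑ j, qd j ^ 2)) := by
    intro x hx
    rw [mem_closedBall_zero_iff, EuclideanSpace.norm_eq]
    apply Real.sqrt_le_sqrt
    apply Finset.sum_le_sum
    intro i _
    have hxi := mem_iInter.mp hx i
    simp only [mem_setOf_eq, mem_Icc] at hxi
    rw [Real.norm_eq_abs, sq_abs]
    nlinarith [hxi.1, hxi.2]
  have hBcompact : IsCompact B :=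
    (isCompact_closedBall _ _).of_isClosed_subset hBclosed hBbdd
  have hKcompact : IsCompact (closure D ∩ B) := hBcompact.inter_left isClosed_closure
  have hKne : (closure D ∩ B).Nonempty := by
    refine ⟨0, subset_closure h0D, mem_iInter.mpr fun j => ?_⟩
    simp only [mem_setOf_eq, mem_Icc]
    constructor
    · rfl
    · exact le_of_lt (hqd j)
  obtain ⟨xs, hxsK, hxsmax⟩ := hKcompact.exists_isMaxOn hKne (hu.mono inter_subset_left)
  set M : ℝ := u xs with hM
  have hMle : ∀ x ∈ closure D, u x ≤ M := by
    intro x hx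
    set z : Fin n → ℤ := fun j => -⌊x j / qd j⌋ with hz
    have hx' : x + latticePt n qd z ∈ closure D := mem_clD_shift z hx
    have hx'B : x + latticePt n qd z ∈ B := by
      apply mem_iInter.mpr
      intro j
      simp only [mem_setOf_eq, mem_Icc]
      have hcoord : (x + latticePt n qd z) j = x j + qd j * ((-⌊x j / qd j⌋ : ℤ) : ℝ) := rfl
      rw [hcoord]
      have hqdj := hqd j
      have hfr : x j + qd j * ((-⌊x j / qd j⌋ : ℤ) : ℝ)
          = qd j * Int.fract (x j / qd j) := by
        rw [Int.fract]
        push_cast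
        field_simp
        ring
      rw [hfr]
      constructor
      · have := Int.fract_nonneg (x j / qd j)
        positivity
      · have h1 := Int.fract_lt_one (x j / qd j)
        nlinarith [Int.fract_nonneg (x j / qd j)]
    have h5 : u (x + latticePt n qd z) ≤ M := hxsmax ⟨hx', hx'B⟩
    rwa [u_shift hper z x hx] at h5
  have hxsclD : xs ∈ closure D := hxsK.1
  -- find a boundary point where max is attained
  have hbdy : ∃ b, b ∈ closure D ∧ b ∉ D ∧ u b = M := by
    by_cases hxsD : xs ∈ D
    · -- strong maximum principle
      have hAopen : IsOpen {x ∈ D | u x = M} :=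
        maxset_isOpen hn hD hC2 hharm (fun x hx => hMle x (subset_closure hx))
      set A : Set (EuclideanSpace ℝ (Fin n)) := {x ∈ D | u x = M} with hA
      set A₂ : Set (EuclideanSpace ℝ (Fin n)) := D ∩ u ⁻¹' ({M}ᶜ) with hA₂
      have hA₂open : IsOpen A₂ :=
        (hu.mono subset_closure).isOpen_inter_preimage hD isOpen_compl_singleton
      set C := connectedComponentIn D xs with hC
      have hCopen : IsOpen C := hD.connectedComponentIn
      have hxsC : xs ∈ C := mem_connectedComponentIn hxsD
      have hCD : C ⊆ D := connectedComponentIn_subset D xs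
      have hCA : C ⊆ A := by
        apply IsPreconnected.subset_left_of_subset_union hAopen hA₂open
        · rw [Set.disjoint_left]
          rintro x ⟨_, hx1⟩ ⟨_, hx2⟩
          exact hx2 hx1
        · intro x hx
          by_cases hux : u x = M
          · exact Or.inl ⟨hCD hx, hux⟩
          · exact Or.inr ⟨hCD hx, hux⟩
        · exact ⟨xs, hxsC, hxsD, rfl⟩
        · exact isPreconnected_connectedComponentIn
      have hCne_univ : C ≠ univ := by
        intro hCuniv
        obtain ⟨i₀, hi₀⟩ := hIne
        have hi₀D : i₀ ∉ D := by
          intro hi₀D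
          exact (mem_perfDom_iff.mp hi₀D) 0
            (by rw [latticePt_zero, sub_zero]; exact subset_closure hi₀)
        exact hi₀D (hCD (hCuniv ▸ mem_univ i₀))
      have hfront : (frontier C).Nonempty := by
        rw [nonempty_iff_ne_empty]
        intro h
        rcases frontier_eq_empty_iff.mp h with h1 | h1
        · exact absurd h1 (nonempty_iff_ne_empty.mp ⟨xs, hxsC⟩)
        · exact hCne_univ h1
      obtain ⟨b, hb⟩ := hfront
      have hbclC : b ∈ closure C := frontier_subset_closure hb
      have hbnotC : b ∉ C := by
        rw [hCopen.frontier_eq] at hb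
        exact hb.2
      have hbclD : b ∈ closure D := closure_mono hCD hbclC
      haveI : (𝓝[C] b).NeBot := mem_closure_iff_nhdsWithin_neBot.mp hbclC
      have hbM : u b = M := by
        have h1 : ContinuousWithinAt u (closure D) b := hu.continuousWithinAt hbclD
        have h2 : Tendsto u (𝓝[C] b) (𝓝 (u b)) :=
          h1.mono (hCD.trans subset_closure)
        have h3 : Tendsto u (𝓝[C] b) (𝓝 M) := by
          have hconst : Tendsto (fun _ : EuclideanSpace ℝ (Fin n) => M) (𝓝[C] b) (𝓝 M) :=
            tendsto_const_nhds
          apply hconst.congr'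
          filter_upwards [eventually_mem_nhdsWithin] with y hy
          exact ((hCA hy).2).symm
        exact tendsto_nhds_unique h2 h3
      refine ⟨b, hbclD, ?_, hbM⟩
      intro hbD
      have hbA : b ∈ A := ⟨hbD, hbM⟩
      obtain ⟨η, hη, hball⟩ := Metric.isOpen_iff.mp hAopen b hbA
      obtain ⟨cpt, hcpt1, hcpt2⟩ := mem_closure_iff.mp hbclC (ball b η)
        isOpen_ball (mem_ball_self hη)
      have hTpre : IsPreconnected (ball b η ∪ C) :=
        IsPreconnected.union cpt hcpt1 hcpt2 (convex_ball b η).isPreconnected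
          isPreconnected_connectedComponentIn
      have hTD : (ball b η ∪ C) ⊆ D :=
        union_subset (fun y hy => (hball hy).1) hCD
      have hTsub : (ball b η ∪ C) ⊆ C :=
        hTpre.subset_connectedComponentIn (Or.inr hxsC) hTD
      exact hbnotC (hTsub (Or.inl (mem_ball_self hη)))
    · exact ⟨xs, hxsclD, hxsD, rfl⟩
  obtain ⟨b, hbclD, hbnD, hbM⟩ := hbdy
  obtain ⟨x₀, hx₀f, hx₀u⟩ := boundary_output hIo hper hbclD hbnD
  refine ⟨x₀, hx₀f, fun x hx => ?_⟩
  rw [hx₀u, hbM]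
  exact hMle x hx


lemma laplacian_neg {n : ℕ} (u : EuclideanSpace ℝ (Fin n) → ℝ) (x : EuclideanSpace ℝ (Fin n)) :
    laplacian n (fun y => -u y) x = -laplacian n u x := by
  unfold laplacian
  rw [← Finset.sum_neg_distrib]
  apply Finset.sum_congr rfl
  intro j _
  set v := EuclideanSpace.single j (1 : ℝ) with hv
  have h1 : (fun y => fderiv ℝ (fun y' => -u y') y v) = fun y => -(fderiv ℝ u y v) := by
    funext y
    rw [fderiv_fun_neg]
    simp
  rw [h1]
  have h2 : fderiv ℝ (fun y => -(fderiv ℝ u y v)) x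
      = -(fderiv ℝ (fun y => fderiv ℝ u y v) x) := fderiv_fun_neg
  rw [h2]
  simp

/-- A continuous `q`-periodic function, harmonic in `𝕊[𝕀]⁻`, attains its maximum and its
minimum over `cl 𝕊[𝕀]⁻` on the boundary `∂𝕀`. -/
theorem periodic_maximum_principle_boundary
    (n : ℕ) (hn : 2 ≤ n) (qd : Fin n → ℝ) (hqd : ∀ j, 0 < qd j)
    (I : Set (EuclideanSpace ℝ (Fin n)))
    (hIne : I.Nonempty) (hIo : IsOpen I) (hIb : Bornology.IsBounded I)
    (hIconn : IsConnected I) (hIext : IsConnected (closure I)ᶜ)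
    (hIQ : closure I ⊆ cellQ n qd)
    (u : EuclideanSpace ℝ (Fin n) → ℝ)
    (hu : ContinuousOn u (closure (perfDom n qd I)))
    (hper : ∀ x ∈ closure (perfDom n qd I), ∀ j : Fin n,
      u (x + EuclideanSpace.single j (qd j)) = u x)
    (hC2 : ContDiffOn ℝ 2 u (perfDom n qd I))
    (hharm : ∀ x ∈ perfDom n qd I, laplacian n u x = 0) :
    (∃ x₀ ∈ frontier I, ∀ x ∈ closure (perfDom n qd I), u x ≤ u x₀) ∧
    (∃ x₁ ∈ frontier I, ∀ x ∈ closure (perfDom n qd I), u x₁ ≤ u x) := by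
  constructor
  · exact aux_max hn hqd hIne hIo hIQ hu hper hC2 hharm
  · have hvper : ∀ x ∈ closure (perfDom n qd I), ∀ j : Fin n,
        (fun y => -u y) (x + EuclideanSpace.single j (qd j)) = (fun y => -u y) x := by
      intro x hx j
      simp [hper x hx j]
    have hvharm : ∀ x ∈ perfDom n qd I, laplacian n (fun y => -u y) x = 0 := by
      intro x hx
      rw [laplacian_neg, hharm x hx, neg_zero]
    obtain ⟨x₁, hx₁f, hx₁⟩ := aux_max hn hqd hIne hIo hIQ hu.neg hvper hC2.neg hvharm
    refine ⟨x₁, hx₁f, fun x hx => ?_⟩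
    have := hx₁ x hx
    simp only [Pi.neg_apply] at this
    linarith
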